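/- arXiv:2206.03728 — 4 statements merged into one kernel-verified Lean document; each statement's English description precedes it below -/
import Mathlib

section
/- If x : ℝ → ℝⁿ solves the quadratic system ẋᵢ = xᵀAᵢx + vᵢᵀx where Aᵢ = wᵢB - B(w eᵢᵀ) - (eᵢ wᵀ)B and V (rows vᵢᵀ) satisfies VᵀB + BV = λB, then b(t) := x(t)ᵀBx(t) satisfies ḃ = b(λ - 2wᵀBx). -/
open Matrix

lemma vecMulVec_mulVec' {n : ℕ} (a b y : Fin n → ℝ) :
    (Matrix.vecMulVec a b).mulVec y = (b ⬝ᵥ y) • a := by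
  funext i
  simp [Matrix.vecMulVec, Matrix.mulVec, dotProduct, Finset.mul_sum, mul_assoc,
    mul_comm, mul_left_comm]

theorem quadratic_form_ode {n : ℕ} (B : Matrix (Fin n) (Fin n) ℝ) (hB : B.IsSymm)
    (w : Fin n → ℝ) (l : ℝ) (v : Fin n → Fin n → ℝ)
    (hV : (Matrix.of v).transpose * B + B * (Matrix.of v) = l • B)
    (A : Fin n → Matrix (Fin n) (Fin n) ℝ)
    (hA : ∀ i, A i = w i • B - B * Matrix.vecMulVec w (Pi.single i 1)
      - Matrix.vecMulVec (Pi.single i 1) w * B)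
    (x : ℝ → Fin n → ℝ)
    (hx : ∀ t, ∀ i, HasDerivAt (fun s => x s i)
      (x t ⬝ᵥ (A i).mulVec (x t) + v i ⬝ᵥ x t) t) :
    ∀ t, HasDerivAt (fun s => x s ⬝ᵥ B.mulVec (x s))
      ((x t ⬝ᵥ B.mulVec (x t)) * (l - 2 * (w ⬝ᵥ B.mulVec (x t)))) t := by
  intro t
  set y : Fin n → ℝ := x t with hy
  set d : Fin n → ℝ := fun i => x t ⬝ᵥ (A i).mulVec (x t) + v i ⬝ᵥ x t with hd
  set b : ℝ := y ⬝ᵥ B.mulVec y with hb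
  set s : ℝ := w ⬝ᵥ B.mulVec y with hs
  -- symmetry fact
  have hsym : ∀ u z : Fin n → ℝ, u ⬝ᵥ B.mulVec z = z ⬝ᵥ B.mulVec u := by
    intro u z
    rw [Matrix.dotProduct_mulVec, ← Matrix.mulVec_transpose, hB.eq, dotProduct_comm]
  -- the derivative as a double sum
  have hfun : (fun s => x s ⬝ᵥ B.mulVec (x s))
      = fun s => ∑ i, ∑ j, x s i * (B i j * x s j) := by
    funext u
    simp [dotProduct, Matrix.mulVec, Finset.mul_sum]
  have hD : HasDerivAt (fun s => x s ⬝ᵥ B.mulVec (x s))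
      (∑ i, ∑ j, (d i * (B i j * y j) + y i * (B i j * d j))) t := by
    rw [hfun]
    apply HasDerivAt.fun_sum
    intro i _
    apply HasDerivAt.fun_sum
    intro j _
    exact (hx t i).mul ((hx t j).const_mul (B i j))
  -- rewrite the double sum as dot products
  have hsum : (∑ i, ∑ j, (d i * (B i j * y j) + y i * (B i j * d j)))
      = d ⬝ᵥ B.mulVec y + y ⬝ᵥ B.mulVec d := by
    simp [dotProduct, Matrix.mulVec, Finset.mul_sum, Finset.sum_add_distrib]
  -- simplify d
  have hdi : d = b • w - (2 * s) • y + (Matrix.of v).mulVec y := by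
    funext i
    show y ⬝ᵥ (A i).mulVec y + v i ⬝ᵥ y = b * w i - (2 * s) * y i + (Matrix.of v).mulVec y i
    show y ⬝ᵥ (A i).mulVec y + v i ⬝ᵥ y = _
    rw [hA i, Matrix.sub_mulVec, Matrix.sub_mulVec, Matrix.smul_mulVec]
    have m1 : (B * Matrix.vecMulVec w (Pi.single i 1)) *ᵥ y = y i • (B *ᵥ w) := by
      rw [← Matrix.mulVec_mulVec, vecMulVec_mulVec', Matrix.mulVec_smul]
      congr 1
      simp [dotProduct, Pi.single_apply]
    have m2 : (Matrix.vecMulVec (Pi.single i 1) w * B) *ᵥ y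
        = s • (Pi.single i 1 : Fin n → ℝ) := by
      rw [← Matrix.mulVec_mulVec, vecMulVec_mulVec', hs]
    have e2 : y ⬝ᵥ (Pi.single i 1 : Fin n → ℝ) = y i := by
      simp [dotProduct, Pi.single_apply]
    have e4 : v i ⬝ᵥ y = (Matrix.of v).mulVec y i := rfl
    rw [m1, m2, dotProduct_sub, dotProduct_sub, dotProduct_smul,
      dotProduct_smul, dotProduct_smul, hsym y w, e2, e4]
    simp only [Pi.add_apply, Pi.sub_apply, Pi.smul_apply, smul_eq_mul, ← hb, ← hs]
    ring
  -- final algebra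
  have hfin : d ⬝ᵥ B.mulVec y + y ⬝ᵥ B.mulVec d = b * (l - 2 * s) := by
    have hVy : ((Matrix.of v).mulVec y) ⬝ᵥ B.mulVec y + y ⬝ᵥ B.mulVec ((Matrix.of v).mulVec y)
        = l * b := by
      have h1 : ((Matrix.of v).mulVec y) ⬝ᵥ B.mulVec y
          = y ⬝ᵥ ((Matrix.of v).transpose * B).mulVec y := by
        rw [← Matrix.mulVec_mulVec, Matrix.dotProduct_mulVec y, Matrix.vecMul_transpose]
      have h2 : y ⬝ᵥ B.mulVec ((Matrix.of v).mulVec y)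
          = y ⬝ᵥ (B * (Matrix.of v)).mulVec y := by
        rw [← Matrix.mulVec_mulVec]
      rw [h1, h2, ← dotProduct_add, ← Matrix.add_mulVec, hV, Matrix.smul_mulVec,
        dotProduct_smul, smul_eq_mul, ← hb]
    have hd1 : d ⬝ᵥ B.mulVec y = b * s - 2 * s * b + ((Matrix.of v).mulVec y) ⬝ᵥ B.mulVec y := by
      rw [hdi, add_dotProduct, sub_dotProduct, smul_dotProduct,
        smul_dotProduct, smul_eq_mul, smul_eq_mul, ← hs, ← hb]
      try ring
    have hd2 : y ⬝ᵥ B.mulVec d = b * s - 2 * s * b + y ⬝ᵥ B.mulVec ((Matrix.of v).mulVec y) := by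
      rw [hdi, Matrix.mulVec_add, Matrix.mulVec_sub, Matrix.mulVec_smul, Matrix.mulVec_smul,
        dotProduct_add, dotProduct_sub, dotProduct_smul,
        dotProduct_smul, hsym y w, smul_eq_mul, smul_eq_mul, ← hs, ← hb]
      try ring
    rw [hd1, hd2]
    linarith [hVy]
  rw [show (x t ⬝ᵥ B.mulVec (x t)) * (l - 2 * (w ⬝ᵥ B.mulVec (x t))) = b * (l - 2 * s) from rfl,
    ← hfin, ← hsum]
  exact hD
end

section
/- For the quadratic system above, the hypersurface {x : xᵀBx = 0} is invariant under the flow: if x(0)ᵀBx(0) = 0 then x(t)ᵀBx(t) = 0 for all t in the interval of existence. -/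
open Matrix

lemma hyp_symmdot {n : ℕ} (B : Matrix (Fin n) (Fin n) ℝ) (hB : B.IsSymm)
    (a b : Fin n → ℝ) : a ⬝ᵥ B.mulVec b = b ⬝ᵥ B.mulVec a := by
  rw [Matrix.dotProduct_mulVec, ← Matrix.vecMul_transpose, hB.eq, dotProduct_comm]

lemma hyp_vecMulVec_mulVec {n : ℕ} (w u y : Fin n → ℝ) :
    (Matrix.vecMulVec w u).mulVec y = (u ⬝ᵥ y) • w := by
  ext i
  simp [Matrix.mulVec, Matrix.vecMulVec, dotProduct, Finset.mul_sum, mul_assoc,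
    mul_comm, mul_left_comm]

lemma hyp_key {n : ℕ} (B : Matrix (Fin n) (Fin n) ℝ) (hB : B.IsSymm)
    (w : Fin n → ℝ) (l : ℝ) (v : Fin n → Fin n → ℝ)
    (hV : (Matrix.of v).transpose * B + B * (Matrix.of v) = l • B)
    (A : Fin n → Matrix (Fin n) (Fin n) ℝ)
    (hA : ∀ i, A i = w i • B - B * Matrix.vecMulVec w (Pi.single i 1)
      - Matrix.vecMulVec (Pi.single i 1) w * B)
    (y : Fin n → ℝ) :
    (fun i => y ⬝ᵥ (A i).mulVec y + v i ⬝ᵥ y) ⬝ᵥ B.mulVec y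
      + y ⬝ᵥ B.mulVec (fun i => y ⬝ᵥ (A i).mulVec y + v i ⬝ᵥ y)
      = (l - 2 * (w ⬝ᵥ B.mulVec y)) * (y ⬝ᵥ B.mulVec y) := by
  set b := y ⬝ᵥ B.mulVec y with hb
  set m := w ⬝ᵥ B.mulVec y with hm
  have hy' : (fun i => y ⬝ᵥ (A i).mulVec y + v i ⬝ᵥ y)
      = b • w + (-(2 * m)) • y + (Matrix.of v).mulVec y := by
    funext i
    have h1 : (A i).mulVec y = w i • B.mulVec y - (y i) • B.mulVec w
        - m • (Pi.single i 1 : Fin n → ℝ) := by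
      rw [hA i, Matrix.sub_mulVec, Matrix.sub_mulVec, Matrix.smul_mulVec,
        ← Matrix.mulVec_mulVec, ← Matrix.mulVec_mulVec, hyp_vecMulVec_mulVec,
        hyp_vecMulVec_mulVec]
      congr 2
      · rw [Matrix.mulVec_smul]
        congr 1
        simp [dotProduct, Pi.single_apply]
    have h2 : y ⬝ᵥ (A i).mulVec y = w i * b - 2 * m * y i := by
      rw [h1, dotProduct_sub, dotProduct_sub, dotProduct_smul, dotProduct_smul,
        dotProduct_smul, hyp_symmdot B hB y w, ← hm, ← hb]
      have : y ⬝ᵥ Pi.single i 1 = y i := by simp [dotProduct, Pi.single_apply]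
      rw [this]
      simp only [smul_eq_mul]
      ring
    have h3 : v i ⬝ᵥ y = (Matrix.of v).mulVec y i := by
      simp [Matrix.mulVec, dotProduct]
    simp only [h2, h3, Pi.add_apply, Pi.smul_apply, smul_eq_mul]
    ring
  have hVy : (Matrix.of v).mulVec y ⬝ᵥ B.mulVec y
      + (Matrix.of v).mulVec y ⬝ᵥ B.mulVec y = l * b := by
    have h1 : y ⬝ᵥ ((Matrix.of v).transpose * B).mulVec y
        = (Matrix.of v).mulVec y ⬝ᵥ B.mulVec y := by
      rw [← Matrix.mulVec_mulVec, Matrix.dotProduct_mulVec, Matrix.vecMul_transpose]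
    have h2 : y ⬝ᵥ (B * Matrix.of v).mulVec y
        = (Matrix.of v).mulVec y ⬝ᵥ B.mulVec y := by
      rw [← Matrix.mulVec_mulVec, hyp_symmdot B hB]
    have := congrArg (fun M => y ⬝ᵥ M.mulVec y) hV
    simpa [Matrix.add_mulVec, dotProduct_add, h1, h2, Matrix.smul_mulVec,
      dotProduct_smul, ← hb] using this
  have hsym : y ⬝ᵥ B.mulVec (fun i => y ⬝ᵥ (A i).mulVec y + v i ⬝ᵥ y)
      = (fun i => y ⬝ᵥ (A i).mulVec y + v i ⬝ᵥ y) ⬝ᵥ B.mulVec y :=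
    hyp_symmdot B hB _ _
  rw [hsym, hy']
  rw [add_dotProduct, add_dotProduct, smul_dotProduct, smul_dotProduct,
    smul_eq_mul, smul_eq_mul, ← hm, ← hb]
  nlinarith [hVy]

theorem hypersurface_invariant {n : ℕ} (B : Matrix (Fin n) (Fin n) ℝ) (hB : B.IsSymm)
    (w : Fin n → ℝ) (l : ℝ) (v : Fin n → Fin n → ℝ)
    (hV : (Matrix.of v).transpose * B + B * (Matrix.of v) = l • B)
    (A : Fin n → Matrix (Fin n) (Fin n) ℝ)
    (hA : ∀ i, A i = w i • B - B * Matrix.vecMulVec w (Pi.single i 1)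
      - Matrix.vecMulVec (Pi.single i 1) w * B)
    (t₁ t₂ : ℝ) (ht₁ : t₁ < 0) (ht₂ : 0 < t₂)
    (x : ℝ → Fin n → ℝ)
    (hx : ∀ t ∈ Set.Ioo t₁ t₂, ∀ i, HasDerivAt (fun s => x s i)
      (x t ⬝ᵥ (A i).mulVec (x t) + v i ⬝ᵥ x t) t)
    (hx0 : x 0 ⬝ᵥ B.mulVec (x 0) = 0) :
    ∀ t ∈ Set.Ioo t₁ t₂, x t ⬝ᵥ B.mulVec (x t) = 0 := by
  have h0 : (0:ℝ) ∈ Set.Ioo t₁ t₂ := ⟨ht₁, ht₂⟩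
  set c : ℝ → ℝ := fun s => l - 2 * (w ⬝ᵥ B.mulVec (x s)) with hcdef
  set b : ℝ → ℝ := fun s => x s ⬝ᵥ B.mulVec (x s) with hbdef
  -- derivative of b
  have hbderiv : ∀ s ∈ Set.Ioo t₁ t₂, HasDerivAt b (c s * b s) s := by
    intro s hs
    set y' : Fin n → ℝ := fun i => x s ⬝ᵥ (A i).mulVec (x s) + v i ⬝ᵥ x s with hy'
    have hsum : HasDerivAt (fun t => ∑ i, x t i * ∑ j, B i j * x t j)
        (∑ i, (y' i * ∑ j, B i j * x s j + x s i * ∑ j, B i j * y' j)) s := by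
      apply HasDerivAt.fun_sum
      intro i _
      exact (hx s hs i).mul (HasDerivAt.fun_sum (fun j _ => (hx s hs j).const_mul (B i j)))
    have hbeq : b = fun t => ∑ i, x t i * ∑ j, B i j * x t j := by
      funext t; simp [hbdef, dotProduct, Matrix.mulVec]
    have hval : (∑ i, (y' i * ∑ j, B i j * x s j + x s i * ∑ j, B i j * y' j))
        = y' ⬝ᵥ B.mulVec (x s) + x s ⬝ᵥ B.mulVec y' := by
      simp [dotProduct, Matrix.mulVec, Finset.sum_add_distrib]
    have hkey := hyp_key B hB w l v hV A hA (x s)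
    have h2 : (∑ i, (y' i * ∑ j, B i j * x s j + x s i * ∑ j, B i j * y' j))
        = c s * b s := by
      rw [hval, hy', hkey]
    rw [← h2, hbeq]
    exact hsum
  -- continuity of c on the interval
  have hcont : ContinuousOn c (Set.Ioo t₁ t₂) := by
    intro s hs
    have : HasDerivAt (fun t => w ⬝ᵥ B.mulVec (x t))
        (∑ i, w i * ∑ j, B i j * (x s ⬝ᵥ (A j).mulVec (x s) + v j ⬝ᵥ x s)) s := by
      have : HasDerivAt (fun t => ∑ i, w i * ∑ j, B i j * x t j)
          (∑ i, w i * ∑ j, B i j * (x s ⬝ᵥ (A j).mulVec (x s) + v j ⬝ᵥ x s)) s := by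
        apply HasDerivAt.fun_sum
        intro i _
        exact (HasDerivAt.fun_sum (fun j _ => (hx s hs j).const_mul (B i j))).const_mul (w i)
      convert this using 2 with t
      simp [dotProduct, Matrix.mulVec]
    exact ((continuousAt_const.sub (this.continuousAt.const_mul 2))).continuousWithinAt
  set C : ℝ → ℝ := fun u => ∫ s in (0:ℝ)..u, c s with hCdef
  have hC : ∀ s ∈ Set.Ioo t₁ t₂, HasDerivAt C (c s) s := by
    intro s hs
    have hsub : Set.uIcc (0:ℝ) s ⊆ Set.Ioo t₁ t₂ :=
      Set.ordConnected_Ioo.uIcc_subset h0 hs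
    exact intervalIntegral.integral_hasDerivAt_right
      ((hcont.mono hsub).intervalIntegrable)
      (hcont.stronglyMeasurableAtFilter isOpen_Ioo s hs)
      ((hcont s hs).continuousAt (isOpen_Ioo.mem_nhds hs))
  set g : ℝ → ℝ := fun s => b s * Real.exp (-C s) with hgdef
  have hg : ∀ s ∈ Set.Ioo t₁ t₂, HasDerivAt g 0 s := by
    intro s hs
    have := (hbderiv s hs).mul ((hC s hs).neg.exp)
    rw [show (0:ℝ) = c s * b s * Real.exp (-C s) + b s * (Real.exp (-C s) * -c s) by ring]
    exact this
  have hb0 : b 0 = 0 := hx0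
  have hg0 : g 0 = 0 := by simp [hgdef, hb0]
  intro t ht
  have hsub : Set.uIcc (0:ℝ) t ⊆ Set.Ioo t₁ t₂ :=
    Set.ordConnected_Ioo.uIcc_subset h0 ht
  have hgt : g t = 0 := by
    rcases le_total 0 t with h | h
    · have hsub' : Set.Icc (0:ℝ) t ⊆ Set.Ioo t₁ t₂ := by
        rwa [Set.uIcc_of_le h] at hsub
      have := constant_of_has_deriv_right_zero
        (fun u hu => ((hg u (hsub' hu)).continuousAt).continuousWithinAt)
        (fun u hu => (hg u (hsub' (Set.mem_Icc_of_Ico hu))).hasDerivWithinAt)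
        t (Set.right_mem_Icc.2 h)
      rw [this, hg0]
    · have hsub' : Set.Icc t (0:ℝ) ⊆ Set.Ioo t₁ t₂ := by
        rwa [Set.uIcc_of_ge h] at hsub
      have := constant_of_has_deriv_right_zero
        (fun u hu => ((hg u (hsub' hu)).continuousAt).continuousWithinAt)
        (fun u hu => (hg u (hsub' (Set.mem_Icc_of_Ico hu))).hasDerivWithinAt)
        0 (Set.right_mem_Icc.2 h)
      rw [← hg0, this]
  have : b t * Real.exp (-C t) = 0 := hgt
  have hbt : b t = 0 := by
    rcases mul_eq_zero.1 this with h | h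
    · exact h
    · exact absurd h (Real.exp_ne_zero _)
  exact hbt
end

section
/- If y₁, y₂ : ℝ → ℝ satisfy ẏ₁ = 2y₂ and ẏ₂ = y₁ + y₂ + 1/2, and q(t) := 2y₁(t)² + 2y₁(t)y₂(t) - 8y₂(t)² (i.e., yᵀBy for B = [[2,1],[1,-4]]) is nonzero on an interval, then x₁ := y₁/(yᵀBy) and x₂ := y₂/(yᵀBy) satisfy ẋ₁ = -x₁² + 4x₁x₂ - x₁ + 2x₂ and ẋ₂ = x₁² + 2x₂² + x₁ on that interval. -/
theorem example2d_solution (I : Set ℝ) (hI : IsOpen I)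
    (y₁ y₂ : ℝ → ℝ)
    (h₁ : ∀ t ∈ I, HasDerivAt y₁ (2 * y₂ t) t)
    (h₂ : ∀ t ∈ I, HasDerivAt y₂ (y₁ t + y₂ t + 1/2) t)
    (q : ℝ → ℝ)
    (hq : ∀ t, q t = 2 * (y₁ t) ^ 2 + 2 * y₁ t * y₂ t - 4 * (y₂ t) ^ 2)
    (hq0 : ∀ t ∈ I, q t ≠ 0)
    (x₁ x₂ : ℝ → ℝ)
    (hx₁ : ∀ t, x₁ t = y₁ t / q t) (hx₂ : ∀ t, x₂ t = y₂ t / q t) :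
    (∀ t ∈ I, HasDerivAt x₁ (-(x₁ t) ^ 2 + 4 * x₁ t * x₂ t - x₁ t + 2 * x₂ t) t) ∧
    (∀ t ∈ I, HasDerivAt x₂ ((x₁ t) ^ 2 + 2 * (x₂ t) ^ 2 + x₁ t) t) := by
  have hqf : q = fun t => 2 * (y₁ t) ^ 2 + 2 * y₁ t * y₂ t - 4 * (y₂ t) ^ 2 := funext hq
  have hx₁f : x₁ = fun t => y₁ t / q t := funext hx₁
  have hx₂f : x₂ = fun t => y₂ t / q t := funext hx₂
  have hq' : ∀ t ∈ I, HasDerivAt q (q t + y₁ t - 4 * y₂ t) t := by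
    intro t ht
    have h := ((((h₁ t ht).pow 2).const_mul 2).add
        (((h₁ t ht).mul (h₂ t ht)).const_mul 2)).sub (((h₂ t ht).pow 2).const_mul 4)
    convert h using 1
    · rfl
    · rfl
    · exact funext fun x => (hq x).trans (by simp only [Pi.add_apply, Pi.sub_apply, Pi.pow_apply, Pi.mul_apply]; ring)
    · rw [hq t]; ring
  constructor
  · intro t ht
    have h := (h₁ t ht).div (hq' t ht) (hq0 t ht)
    have h' : HasDerivAt x₁
        ((2 * y₂ t * q t - y₁ t * (q t + y₁ t - 4 * y₂ t)) / q t ^ 2) t := hx₁f ▸ h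
    convert h' using 1
    have h0 := hq0 t ht
    rw [hx₁ t, hx₂ t]
    field_simp
    rw [hq t]; ring
  · intro t ht
    have h := (h₂ t ht).div (hq' t ht) (hq0 t ht)
    have h' : HasDerivAt x₂
        (((y₁ t + y₂ t + 1/2) * q t - y₂ t * (q t + y₁ t - 4 * y₂ t)) / q t ^ 2) t := hx₂f ▸ h
    convert h' using 1
    have h0 := hq0 t ht
    rw [hx₁ t, hx₂ t]
    field_simp
    rw [hq t]; ring
end

section
/- If Vᵀ has n linearly independent eigenvectors r₁,…,rₙ with eigenvalues s₁,…,sₙ, then every symmetric solution B of VᵀB + BV = λB is a linear combination of the matrices P_{jm} = (r_j r_mᵀ + r_m r_jᵀ)/2 over those pairs (j,m) with s_j + s_m = λ. -/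
open Matrix

theorem eigenmatrix_in_span {n : ℕ} (V : Matrix (Fin n) (Fin n) ℝ)
    (r : Fin n → Fin n → ℝ) (s : Fin n → ℝ)
    (hr : LinearIndependent ℝ r)
    (heig : ∀ j, V.transpose.mulVec (r j) = s j • r j)
    (l : ℝ) (B : Matrix (Fin n) (Fin n) ℝ) (hBs : B.IsSymm)
    (hB : V.transpose * B + B * V = l • B) :
    B ∈ Submodule.span ℝ
      ((fun p : Fin n × Fin n =>
          (1/2 : ℝ) • (Matrix.vecMulVec (r p.1) (r p.2) + Matrix.vecMulVec (r p.2) (r p.1)))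
        '' {p : Fin n × Fin n | s p.1 + s p.2 = l}) := by
  classical
  set R : Matrix (Fin n) (Fin n) ℝ := Matrix.of r with hRdef
  have hRunit : IsUnit R := Matrix.linearIndependent_rows_iff_isUnit.mp hr
  have hRdet : IsUnit R.det := (Matrix.isUnit_iff_isUnit_det R).mp hRunit
  have hRTdet : IsUnit Rᵀ.det := by rwa [Matrix.det_transpose]
  -- eigen equation as matrix: Vᵀ * Rᵀ = Rᵀ * diagonal s
  have hmat : Vᵀ * Rᵀ = Rᵀ * Matrix.diagonal s := by
    ext i j
    have := congrFun (heig j) i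
    simp [Matrix.mulVec, dotProduct] at this
    simp [Matrix.mul_apply, hRdef, Matrix.diagonal_apply, mul_ite, Finset.sum_ite_eq]
    rw [mul_comm]
    exact this
  have hmat2 : R * V = Matrix.diagonal s * R := by
    have := congrArg Matrix.transpose hmat
    simpa [Matrix.transpose_mul, Matrix.diagonal_transpose] using this
  set C : Matrix (Fin n) (Fin n) ℝ := (Rᵀ)⁻¹ * B * R⁻¹ with hCdef
  have hcancel : ∀ M : Matrix (Fin n) (Fin n) ℝ,
      (Rᵀ)⁻¹ * (Rᵀ * M * R) * R⁻¹ = M := by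
    intro M
    rw [Matrix.mul_assoc Rᵀ M R, Matrix.nonsing_inv_mul_cancel_left _ _ hRTdet,
      Matrix.mul_nonsing_inv_cancel_right _ _ hRdet]
  have hBC : B = Rᵀ * C * R := by
    rw [hCdef]
    rw [show Rᵀ * ((Rᵀ)⁻¹ * B * R⁻¹) * R = (Rᵀ * (Rᵀ)⁻¹) * B * (R⁻¹ * R) by
      noncomm_ring]
    rw [Matrix.mul_nonsing_inv _ hRTdet, Matrix.nonsing_inv_mul _ hRdet, one_mul,
      Matrix.mul_one]
  -- symmetry of C
  have hCs : Cᵀ = C := by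
    rw [hCdef]
    rw [Matrix.transpose_mul, Matrix.transpose_mul, Matrix.transpose_nonsing_inv,
      Matrix.transpose_nonsing_inv, Matrix.transpose_transpose, hBs.eq]
    noncomm_ring
  -- the key relation
  have hDC : Matrix.diagonal s * C + C * Matrix.diagonal s = l • C := by
    have h1 : Rᵀ * (Matrix.diagonal s * C + C * Matrix.diagonal s) * R
        = Rᵀ * (l • C) * R := by
      calc Rᵀ * (Matrix.diagonal s * C + C * Matrix.diagonal s) * R
          = (Vᵀ * Rᵀ) * C * R + Rᵀ * C * (Matrix.diagonal s * R) := by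
            rw [hmat]; noncomm_ring
        _ = Vᵀ * (Rᵀ * C * R) + (Rᵀ * C * R) * V := by rw [← hmat2]; noncomm_ring
        _ = Vᵀ * B + B * V := by rw [← hBC]
        _ = l • B := hB
        _ = Rᵀ * (l • C) * R := by rw [hBC, Matrix.mul_smul, Matrix.smul_mul]
    have h2 : (Rᵀ)⁻¹ * (Rᵀ * (Matrix.diagonal s * C + C * Matrix.diagonal s) * R) * R⁻¹
        = (Rᵀ)⁻¹ * (Rᵀ * (l • C) * R) * R⁻¹ := by rw [h1]
    rwa [hcancel, hcancel] at h2
  have hCzero : ∀ j m, s j + s m ≠ l → C j m = 0 := by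
    intro j m hjm
    have := congrFun (congrFun hDC j) m
    simp [Matrix.add_apply, Matrix.diagonal_mul, Matrix.mul_diagonal,
      Matrix.smul_apply, smul_eq_mul] at this
    have h3 : (s j + s m - l) * C j m = 0 := by ring_nf; linarith [this]
    rcases mul_eq_zero.mp h3 with h | h
    · exact absurd (by linarith) hjm
    · exact h
  -- B as double sum
  have hB2 : B = ∑ p : Fin n × Fin n, C p.1 p.2 • Matrix.vecMulVec (r p.1) (r p.2) := by
    rw [hBC]
    ext i k
    simp [Matrix.mul_apply, Matrix.sum_apply, Matrix.vecMulVec_apply, Finset.mul_sum,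
      Finset.sum_mul, Fintype.sum_prod_type, hRdef]
    rw [Finset.sum_comm]
    refine Finset.sum_congr rfl fun j _ => Finset.sum_congr rfl fun m _ => by ring
  have hswap : ∑ p : Fin n × Fin n, (C p.1 p.2 * (1/2)) • Matrix.vecMulVec (r p.2) (r p.1)
      = ∑ p : Fin n × Fin n, (C p.1 p.2 * (1/2)) • Matrix.vecMulVec (r p.1) (r p.2) := by
    calc ∑ p : Fin n × Fin n, (C p.1 p.2 * (1/2)) • Matrix.vecMulVec (r p.2) (r p.1)
        = ∑ p : Fin n × Fin n, (C p.2 p.1 * (1/2)) • Matrix.vecMulVec (r p.2) (r p.1) := by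
          refine Finset.sum_congr rfl fun p _ => ?_
          have h := congrFun (congrFun hCs p.1) p.2
          rw [Matrix.transpose_apply] at h
          rw [h]
      _ = ∑ p : Fin n × Fin n, (C p.1 p.2 * (1/2)) • Matrix.vecMulVec (r p.1) (r p.2) :=
          Equiv.sum_comp (Equiv.prodComm (Fin n) (Fin n))
            (fun p => (C p.1 p.2 * (1/2)) • Matrix.vecMulVec (r p.1) (r p.2))
  have hBsum : B = ∑ p : Fin n × Fin n, C p.1 p.2 •
      ((1/2 : ℝ) • (Matrix.vecMulVec (r p.1) (r p.2) + Matrix.vecMulVec (r p.2) (r p.1))) := by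
    rw [hB2]
    symm
    calc ∑ p : Fin n × Fin n, C p.1 p.2 •
        ((1/2 : ℝ) • (Matrix.vecMulVec (r p.1) (r p.2) + Matrix.vecMulVec (r p.2) (r p.1)))
        = ∑ p : Fin n × Fin n, ((C p.1 p.2 * (1/2)) • Matrix.vecMulVec (r p.1) (r p.2)
            + (C p.1 p.2 * (1/2)) • Matrix.vecMulVec (r p.2) (r p.1)) := by
          refine Finset.sum_congr rfl fun p _ => ?_
          rw [smul_add, smul_add, smul_smul, smul_smul]
      _ = ∑ p : Fin n × Fin n, (C p.1 p.2 * (1/2)) • Matrix.vecMulVec (r p.1) (r p.2)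
            + ∑ p : Fin n × Fin n, (C p.1 p.2 * (1/2)) • Matrix.vecMulVec (r p.2) (r p.1) :=
          Finset.sum_add_distrib
      _ = ∑ p : Fin n × Fin n, C p.1 p.2 • Matrix.vecMulVec (r p.1) (r p.2) := by
          rw [hswap, ← Finset.sum_add_distrib]
          refine Finset.sum_congr rfl fun p _ => ?_
          rw [← add_smul]
          congr 1
          ring
  rw [hBsum]
  refine Submodule.sum_mem _ fun p _ => ?_
  by_cases hp : s p.1 + s p.2 = l
  · exact Submodule.smul_mem _ _ (Submodule.subset_span ⟨p, hp, rfl⟩)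
  · rw [hCzero p.1 p.2 hp, zero_smul]
    exact Submodule.zero_mem _
end
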